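/- Let (X,κ) be a Lefschetz complex over a ring R with unity. If X admits an acyclic multivector field all of whose multivectors are regular, then X is a zero space, i.e. H^κ(X) = 0. -/

import Mathlib

open scoped Classical

namespace CMVF

variable {R : Type*} [Ring R] {X : Type*} [Fintype X]

/-- A Lefschetz complex over `R` with cells `X`. -/
structure Lefschetz (R : Type*) [Ring R] (X : Type*) [Fintype X] where
  dim : X → ℕ
  κ : X → X → R
  dim_facet : ∀ x y, κ x y ≠ 0 → dim x = dim y + 1
  κ_sq : ∀ x z, (∑ y : X, κ x y * κ y z) = 0

namespace Lefschetz

variable (L : Lefschetz R X)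

/-- The face order `y ≤κ x` : the partial order generated by the facet relation. -/
def le (y x : X) : Prop := Relation.ReflTransGen (fun a b => L.κ b a ≠ 0) y x

/-- Closure of a set of cells: all faces of cells of `A`. -/
def cls (A : Set X) : Set X := {z | ∃ a ∈ A, L.le z a}

/-- Closure of a single cell. -/
def clPt (x : X) : Set X := L.cls {x}

/-- The minimal open set containing `x`. -/
def opn (x : X) : Set X := {z | L.le x z}

/-- `A` is closed. -/
def Closed (A : Set X) : Prop := L.cls A = A

/-- The mouth of `A`. -/
def mo (A : Set X) : Set X := L.cls A \ A

/-- `A` is proper: its mouth is closed. -/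
def Proper (A : Set X) : Prop := L.Closed (L.mo A)

/-- Relative closure within an ambient subcomplex `W`. -/
def clsIn (W A : Set X) : Set X := L.cls A ∩ W

/-- Relative mouth within an ambient subcomplex `W`. -/
def moIn (W A : Set X) : Set X := L.clsIn W A \ A

/-- The boundary operator of the subcomplex determined by `A`
(`∂ x = ∑ y ∈ A, κ x y • y` for `x ∈ A`). -/
noncomputable def bd (A : Set X) : (X → R) →ₗ[R] (X → R) where
  toFun f := fun y => if y ∈ A then ∑ x : X, (if x ∈ A then f x * L.κ x y else 0) else 0
  map_add' f g := by
    funext y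
    by_cases hy : y ∈ A
    · simp only [hy, if_true, Pi.add_apply]
      rw [← Finset.sum_add_distrib]
      refine Finset.sum_congr rfl fun x _ => ?_
      by_cases hx : x ∈ A <;> simp [hx, add_mul]
    · simp [hy]
  map_smul' r f := by
    funext y
    by_cases hy : y ∈ A
    · simp only [hy, if_true, Pi.smul_apply, smul_eq_mul, RingHom.id_apply]
      rw [Finset.mul_sum]
      refine Finset.sum_congr rfl fun x _ => ?_
      by_cases hx : x ∈ A <;> simp [hx, mul_assoc]
    · simp [hy]

/-- The `n`-chains of the subcomplex determined by `A`. -/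
noncomputable def chainGroup (A : Set X) (n : ℕ) : Submodule R (X → R) :=
  Submodule.span R {f | ∃ x ∈ A, L.dim x = n ∧ f = Pi.single x 1}

/-- The `n`-cycles of the subcomplex determined by `A`. -/
noncomputable def cycles (A : Set X) (n : ℕ) : Submodule R (X → R) :=
  L.chainGroup A n ⊓ LinearMap.ker (L.bd A)

/-- The `n`-boundaries of the subcomplex determined by `A`. -/
noncomputable def boundaries (A : Set X) (n : ℕ) : Submodule R (X → R) :=
  (L.chainGroup A (n + 1)).map (L.bd A)

/-- The Lefschetz homology `H^κ_n(A)` of the subcomplex determined by `A`. -/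
noncomputable def homology (A : Set X) (n : ℕ) : Type _ :=
  (L.cycles A n) ⧸ ((L.boundaries A n).comap (L.cycles A n).subtype)

noncomputable instance homologyAddCommGroup (A : Set X) (n : ℕ) :
    AddCommGroup (L.homology A n) :=
  inferInstanceAs (AddCommGroup
    ((L.cycles A n) ⧸ ((L.boundaries A n).comap (L.cycles A n).subtype)))

noncomputable instance homologyModule (A : Set X) (n : ℕ) :
    Module R (L.homology A n) :=
  inferInstanceAs (Module R
    ((L.cycles A n) ⧸ ((L.boundaries A n).comap (L.cycles A n).subtype)))

/-- `A` is a zero space: its Lefschetz homology vanishes. -/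
def HomologyZero (A : Set X) : Prop := ∀ n, Subsingleton (L.homology A n)

/-- The Poincaré polynomial `p_A(t) = ∑ rank H^κ_n(A) tⁿ`. -/
noncomputable def poincare (A : Set X) : Polynomial ℕ :=
  ∑ n ∈ Finset.image L.dim Finset.univ,
    Polynomial.C (Module.finrank R (L.homology A n)) * Polynomial.X ^ n

/-- `V` is a multivector: proper, with a unique maximal element. -/
def IsMV (V : Set X) : Prop :=
  L.Proper V ∧ ∃! m, m ∈ V ∧ ∀ x ∈ V, L.le x m

/-- A regular multivector: one with vanishing Lefschetz homology. -/
def Regular (V : Set X) : Prop := L.HomologyZero V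

end Lefschetz

/-- A combinatorial multivector field on a Lefschetz complex: a partition into multivectors. -/
structure MVField {R : Type*} [Ring R] {X : Type*} [Fintype X] (L : Lefschetz R X) where
  mvs : Set (Set X)
  isMV : ∀ V ∈ mvs, L.IsMV V
  cover : ∀ x : X, ∃! V, V ∈ mvs ∧ x ∈ V

namespace MVField

variable {L : Lefschetz R X} (F : MVField L)

/-- `[x]` : the multivector containing `x`. -/
noncomputable def mclass (x : X) : Set X := (F.cover x).exists.choose

lemma mclass_spec (x : X) : F.mclass x ∈ F.mvs ∧ x ∈ F.mclass x :=
  (F.cover x).exists.choose_spec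

/-- `x★` : the dominant cell of the multivector containing `x`. -/
noncomputable def star (x : X) : X :=
  ((F.isMV _ (F.mclass_spec x).1).2).exists.choose

/-- `[x]°` : the regular part of the multivector of `x`. -/
noncomputable def regPart (x : X) : Set X :=
  if L.Regular (F.mclass x) then F.mclass x else F.mclass x \ {F.star x}

/-- The multivalued map `Π_𝒱`. -/
noncomputable def Pi (x : X) : Set X :=
  if x = F.star x then L.clPt x \ F.regPart x else {F.star x}

/-- The multivalued map of the multivector field restricted to the subcomplex `W`. -/
noncomputable def PiIn (W : Set X) (x : X) : Set X := F.Pi x ∩ W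

/-- `φ : ℤ → X` is a full solution of the multivector field restricted to `W`. -/
def IsSolIn (W : Set X) (φ : ℤ → X) : Prop := ∀ i, φ (i + 1) ∈ F.PiIn W (φ i)

/-- There is a full solution (of the field restricted to `W`) through `x` with values in `A`. -/
def FullSolThroughIn (W : Set X) (x : X) (A : Set X) : Prop :=
  ∃ φ : ℤ → X, F.IsSolIn W φ ∧ (∃ i, φ i = x) ∧ ∀ i, φ i ∈ A

/-- `A` is `𝒱`-compatible. -/
def Compat (A : Set X) : Prop := ∀ x ∈ A, F.mclass x ⊆ A

/-- `[A]⁻` : the maximal `𝒱`-compatible subset of `A`. -/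
def lowerC (A : Set X) : Set X := {x ∈ A | F.mclass x ⊆ A}

/-- `[A]⁺` : the minimal `𝒱`-compatible superset of `A`. -/
def upperC (A : Set X) : Set X := ⋃ x ∈ A, F.mclass x

/-- `Inv A`, the invariant part of `A`, computed in the subcomplex `W`. -/
def InvPartIn (W A : Set X) : Set X :=
  {x ∈ A | F.FullSolThroughIn W (F.star x) (F.lowerC A)}

/-- `A` is invariant (within the subcomplex `W`). -/
def InvariantIn (W A : Set X) : Prop := F.InvPartIn W A = A

/-- `φ` is a path (solution) on the integer interval `[a,b]`, within the subcomplex `W`. -/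
def IsPathOnIn (W : Set X) (a b : ℤ) (φ : ℤ → X) : Prop :=
  ∀ i, a ≤ i → i < b → φ (i + 1) ∈ F.PiIn W (φ i)

/-- `S` admits an internal tangency within the subcomplex `W`. -/
def HasInternalTangencyIn (W S : Set X) : Prop :=
  ∃ (a b : ℤ) (φ : ℤ → X), a ≤ b ∧ F.IsPathOnIn W a b φ ∧
    (∀ i, a ≤ i → i ≤ b → φ i ∈ L.clsIn W S) ∧ φ a ∈ S ∧ φ b ∈ S ∧
    ∃ i, a ≤ i ∧ i ≤ b ∧ φ i ∈ L.moIn W S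

/-- `S` is an isolated invariant set within the subcomplex `W`. -/
def IsoInvIn (W S : Set X) : Prop :=
  F.InvariantIn W S ∧ ¬ F.HasInternalTangencyIn W S

/-- `N` is a trapping region within the subcomplex `W`. -/
def TrappingIn (W N : Set X) : Prop :=
  N ⊆ W ∧ F.Compat N ∧ ∀ x ∈ N, F.PiIn W x ⊆ N

/-- `N` is a backward trapping region within the subcomplex `W`. -/
def BackTrappingIn (W N : Set X) : Prop :=
  N ⊆ W ∧ F.Compat N ∧ ∀ x ∈ W, ∀ y ∈ F.PiIn W x, y ∈ N → x ∈ N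

/-- `A` is an attractor within the subcomplex `W`. -/
def AttractorIn (W A : Set X) : Prop :=
  ∃ N, F.TrappingIn W N ∧ A = F.InvPartIn W N

/-- `A` is a repeller within the subcomplex `W`. -/
def RepellerIn (W A : Set X) : Prop :=
  ∃ N, F.BackTrappingIn W N ∧ A = F.InvPartIn W N

/-- The α-limit set of a full solution `φ`. -/
def alphaIn (W : Set X) (φ : ℤ → X) : Set X :=
  ⋂ k : ℕ, F.InvPartIn W (F.upperC (φ '' {i : ℤ | i ≤ -(k : ℤ)}))

/-- The ω-limit set of a full solution `φ`. -/
def omegaIn (W : Set X) (φ : ℤ → X) : Set X :=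
  ⋂ k : ℕ, F.InvPartIn W (F.upperC (φ '' {i : ℤ | (k : ℤ) ≤ i}))

/-- `C(A',A)` : the set of cells lying on connections running from `A'` to `A`. -/
def ConnIn (W A' A : Set X) : Set X :=
  {x | ∃ φ : ℤ → X, F.IsSolIn W φ ∧ (∃ i, φ i = F.star x) ∧
        F.alphaIn W φ ⊆ A' ∧ F.omegaIn W φ ⊆ A}

/-- `(A, Rp)` is an attractor-repeller pair in the subcomplex `W`. -/
def ARPairIn (W A Rp : Set X) : Prop :=
  F.AttractorIn W A ∧ F.RepellerIn W Rp ∧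
    A = F.InvPartIn W (W \ Rp) ∧ Rp = F.InvPartIn W (W \ A)

/-- `M` is a Morse decomposition of the subcomplex `W`, with admissible order `le`. -/
def MorseDecompIn (W : Set X) {P : Type*} [Finite P] (le : P → P → Prop)
    (M : P → Set X) : Prop :=
  IsPartialOrder P le ∧
  (∀ r, F.IsoInvIn W (M r)) ∧
  (∀ r r', r ≠ r' → Disjoint (M r) (M r')) ∧
  (∀ φ : ℤ → X, F.IsSolIn W φ →
    ∃ r r', le r r' ∧ F.alphaIn W φ ⊆ M r' ∧ F.omegaIn W φ ⊆ M r) ∧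
  (∀ φ : ℤ → X, F.IsSolIn W φ → ∀ r,
    F.alphaIn W φ ⊆ M r → F.omegaIn W φ ⊆ M r → Set.range φ ⊆ M r)

/-- The Morse set `M(I)` of a family of sets indexed by `I ⊆ P`. -/
def MorseSetIn (W : Set X) {P : Type*} (M : P → Set X) (I : Set P) : Set X :=
  ⋃ r ∈ I, ⋃ r' ∈ I, F.ConnIn W (M r') (M r)

/-- `(P₁, P₂)` is an index pair for the isolated invariant set `S`. -/
def IndexPair (S P₁ P₂ : Set X) : Prop :=
  L.Closed P₁ ∧ L.Closed P₂ ∧ P₂ ⊆ P₁ ∧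
  (∀ x ∈ P₂, ∀ y ∈ F.Pi x, y ∈ P₁ → y ∈ P₂) ∧
  (∀ x ∈ P₁, (∃ y ∈ F.Pi x, y ∉ P₁) → x ∈ P₂) ∧
  S = F.InvPartIn Set.univ (P₁ \ P₂)

/-- `x ⤳_A y` : there is a path of length at least two in `A` from `x★` to `y★`. -/
def PathConn (A : Set X) (x y : X) : Prop :=
  ∃ (a b : ℤ) (φ : ℤ → X), a < b ∧
    (∀ i, a ≤ i → i < b → φ (i + 1) ∈ F.Pi (φ i)) ∧
    (∀ i, a ≤ i → i ≤ b → φ i ∈ A) ∧ φ a = F.star x ∧ φ b = F.star y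

/-- The chain recurrent set. -/
def CR : Set X := {x | F.PathConn Set.univ x x}

/-- `B` is a basic set: an equivalence class of mutual connectedness in `CR`. -/
def IsBasicSet (B : Set X) : Prop :=
  ∃ x ∈ F.CR, B = {y ∈ F.CR | F.PathConn Set.univ x y ∧ F.PathConn Set.univ y x}

/-- The set `E_P` of cells of `P₁` all of whose forward solutions meet `P₂`. -/
def Ep (P₁ P₂ : Set X) : Set X :=
  {x ∈ P₁ | ∀ φ : ℕ → X, φ 0 = x → (∀ i, φ (i + 1) ∈ F.Pi (φ i)) → ∃ i, φ i ∈ P₂}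

/-- The preorder `≤_𝒱` induced by the arrows of the multivector field. -/
def leV : X → X → Prop := Relation.ReflTransGen (fun y x => y ∈ F.Pi x)

/-- The multivector field is acyclic: `≤_𝒱` is a partial order. -/
def Acyclic : Prop := ∀ x y, F.leV x y → F.leV y x → x = y

end MVField

end CMVF

open CMVF

section Aux

namespace CMVF

variable {R : Type*} [Ring R] {X : Type*} [Fintype X]

namespace Lefschetz

variable (L : Lefschetz R X)

/-- The set of chains supported on `B` in dimension `n`, as a submodule. -/
def chainSet (B : Set X) (n : ℕ) : Submodule R (X → R) where
  carrier := {f | ∀ x, f x ≠ 0 → x ∈ B ∧ L.dim x = n}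
  add_mem' := by
    intro f g hf hg x hx
    by_cases h : f x = 0
    · exact hg x (by simpa [h] using hx)
    · exact hf x h
  zero_mem' := by intro x hx; simp at hx
  smul_mem' := by
    intro r f hf x hx
    refine hf x fun h => hx ?_
    simp [h]

lemma chainGroup_eq (B : Set X) (n : ℕ) : L.chainGroup B n = L.chainSet B n := by
  apply le_antisymm
  · rw [chainGroup, Submodule.span_le]
    rintro f ⟨x, hx, hd, rfl⟩ y hy
    have hxy : y = x := by
      by_contra h
      simp [Pi.single_apply, h] at hy
    subst hxy
    exact ⟨hx, hd⟩
  · intro f hf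
    have hrepr : f = ∑ x : X, Pi.single x (f x) := by
      funext y
      rw [Finset.sum_apply]
      simp [Pi.single_apply]
    rw [hrepr]
    apply Submodule.sum_mem
    intro x _
    by_cases h : f x = 0
    · simp [h]
    · have hsm : Pi.single x (f x) = f x • (Pi.single x 1 : X → R) := by
        funext y
        by_cases hyx : y = x <;> simp [Pi.single_apply, hyx]
      rw [hsm]
      exact Submodule.smul_mem _ _
        (Submodule.subset_span ⟨x, (hf x h).1, (hf x h).2, rfl⟩)

lemma chainSet_mono {A B : Set X} (h : A ⊆ B) (n : ℕ) :
    L.chainSet A n ≤ L.chainSet B n := by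
  intro f hf x hx
  exact ⟨h (hf x hx).1, (hf x hx).2⟩

lemma closed_iff_facet (B : Set X) :
    L.Closed B ↔ ∀ x ∈ B, ∀ y, L.κ x y ≠ 0 → y ∈ B := by
  constructor
  · intro h x hx y hy
    have : y ∈ L.cls B := ⟨x, hx, Relation.ReflTransGen.single hy⟩
    rw [h] at this
    exact this
  · intro h
    apply Set.Subset.antisymm
    · rintro z ⟨a, ha, hle⟩
      induction hle using Relation.ReflTransGen.head_induction_on with
      | refl => exact ha
      | head hstep _ ih => exact h _ ih _ hstep
    · intro z hz
      exact ⟨z, hz, Relation.ReflTransGen.refl⟩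

lemma bd_apply (B : Set X) (f : X → R) (y : X) :
    L.bd B f y = if y ∈ B then ∑ x : X, (if x ∈ B then f x * L.κ x y else 0) else 0 := rfl

lemma bd_eq_of_closed {A B : Set X} (hAB : A ⊆ B) (hA : L.Closed A)
    {f : X → R} (hf : ∀ x, f x ≠ 0 → x ∈ A) : L.bd B f = L.bd A f := by
  classical
  have hfacet := (L.closed_iff_facet A).1 hA
  funext y
  rw [bd_apply, bd_apply]
  have hsum : (∑ x : X, (if x ∈ B then f x * L.κ x y else 0)) =
      ∑ x : X, (if x ∈ A then f x * L.κ x y else 0) := by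
    refine Finset.sum_congr rfl fun x _ => ?_
    by_cases hx : x ∈ A
    · rw [if_pos (hAB hx), if_pos hx]
    · rw [if_neg hx]
      by_cases hxB : x ∈ B
      · rw [if_pos hxB]
        by_cases hfx : f x = 0
        · rw [hfx, zero_mul]
        · exact absurd (hf x hfx) hx
      · rw [if_neg hxB]
  by_cases hy : y ∈ A
  · rw [if_pos (hAB hy), if_pos hy, hsum]
  · rw [if_neg hy]
    by_cases hyB : y ∈ B
    · rw [if_pos hyB, hsum]
      refine Finset.sum_eq_zero fun x _ => ?_
      by_cases hx : x ∈ A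
      · rw [if_pos hx]
        by_cases hfx : f x = 0
        · rw [hfx, zero_mul]
        · by_cases hκ : L.κ x y = 0
          · rw [hκ, mul_zero]
          · exact absurd (hfacet x hx y hκ) hy
      · rw [if_neg hx]
    · rw [if_neg hyB]

lemma bd_bd {B : Set X} (hB : L.Closed B) (f : X → R) :
    L.bd B (L.bd B f) = 0 := by
  classical
  have hfacet := (L.closed_iff_facet B).1 hB
  funext y
  rw [bd_apply]
  by_cases hy : y ∈ B
  · rw [if_pos hy]
    have hterm : ∀ x : X, (if x ∈ B then (L.bd B f) x * L.κ x y else 0) =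
        ∑ t : X, (if t ∈ B then f t * (if x ∈ B then L.κ t x * L.κ x y else 0) else 0) := by
      intro x
      by_cases hx : x ∈ B
      · rw [if_pos hx, bd_apply, if_pos hx, Finset.sum_mul]
        refine Finset.sum_congr rfl fun t _ => ?_
        by_cases ht : t ∈ B
        · rw [if_pos ht, if_pos ht, if_pos hx, mul_assoc]
        · rw [if_neg ht, if_neg ht, zero_mul]
      · rw [if_neg hx]
        refine (Finset.sum_eq_zero fun t _ => ?_).symm
        by_cases ht : t ∈ B
        · rw [if_pos ht, if_neg hx, mul_zero]
        · rw [if_neg ht]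
    rw [Finset.sum_congr rfl fun x _ => hterm x, Finset.sum_comm]
    refine Finset.sum_eq_zero fun t _ => ?_
    by_cases hft : ∀ s, (if t ∈ B then f t * (if s ∈ B then L.κ t s * L.κ s y else 0) else 0) = 0
    · exact Finset.sum_eq_zero fun s _ => hft s
    · push_neg at hft
      obtain ⟨s₀, hs₀⟩ := hft
      have ht : t ∈ B := by
        by_contra h
        exact hs₀ (if_neg h)
      have : (∑ x : X, (if x ∈ B then f t * (L.κ t x * L.κ x y) else 0)) =
          ∑ x : X, f t * (L.κ t x * L.κ x y) := by
        refine Finset.sum_congr rfl fun x _ => ?_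
        by_cases hx : x ∈ B
        · rw [if_pos hx]
        · rw [if_neg hx]
          by_cases hκ : L.κ t x = 0
          · rw [hκ, zero_mul, mul_zero]
          · exact absurd (hfacet t ht x hκ) hx
      calc (∑ x : X, (if t ∈ B then f t * (if x ∈ B then L.κ t x * L.κ x y else 0) else 0))
          = ∑ x : X, (if x ∈ B then f t * (L.κ t x * L.κ x y) else 0) := by
            refine Finset.sum_congr rfl fun x _ => ?_
            rw [if_pos ht]
            by_cases hx : x ∈ B
            · rw [if_pos hx, if_pos hx]
            · rw [if_neg hx, if_neg hx, mul_zero]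
        _ = ∑ x : X, f t * (L.κ t x * L.κ x y) := this
        _ = f t * ∑ x : X, L.κ t x * L.κ x y := by rw [Finset.mul_sum]
        _ = 0 := by rw [L.κ_sq t y, mul_zero]
  · rw [if_neg hy]
    rfl

lemma bd_mem_chainSet {B : Set X} {n : ℕ} {f : X → R}
    (hf : f ∈ L.chainSet B (n + 1)) : L.bd B f ∈ L.chainSet B n := by
  intro y hy
  rw [bd_apply] at hy
  by_cases hyB : y ∈ B
  · refine ⟨hyB, ?_⟩
    rw [if_pos hyB] at hy
    obtain ⟨x, _, hx⟩ := Finset.exists_ne_zero_of_sum_ne_zero hy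
    have hxB : x ∈ B := by
      by_contra h
      exact hx (if_neg h)
    rw [if_pos hxB] at hx
    have hfx : f x ≠ 0 := fun h => hx (by rw [h, zero_mul])
    have hκ : L.κ x y ≠ 0 := fun h => hx (by rw [h, mul_zero])
    have := L.dim_facet x y hκ
    have hdx := (hf x hfx).2
    omega
  · rw [if_neg hyB] at hy
    exact absurd rfl hy

lemma regular_le {B : Set X} (h : L.Regular B) (n : ℕ) :
    L.cycles B n ≤ L.boundaries B n := by
  intro z hz
  have hsub : Subsingleton
      ((L.cycles B n) ⧸ ((L.boundaries B n).comap (L.cycles B n).subtype)) := h n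
  have htop := Submodule.Quotient.subsingleton_iff.mp hsub
  have : (⟨z, hz⟩ : L.cycles B n) ∈
      ((L.boundaries B n).comap (L.cycles B n).subtype) := htop ▸ Submodule.mem_top
  exact this

end Lefschetz

namespace MVField

variable {L : Lefschetz R X} (F : MVField L)

lemma mclass_eq {x y : X} (h : x ∈ F.mclass y) : F.mclass x = F.mclass y :=
  (F.cover x).unique ⟨(F.mclass_spec x).1, (F.mclass_spec x).2⟩ ⟨(F.mclass_spec y).1, h⟩

lemma star_spec (x : X) :
    F.star x ∈ F.mclass x ∧ ∀ y ∈ F.mclass x, L.le y (F.star x) :=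
  ((F.isMV _ (F.mclass_spec x).1).2).exists.choose_spec

lemma star_eq {x y : X} (h : y ∈ F.mclass x) : F.star y = F.star x := by
  have hc : F.mclass y = F.mclass x := F.mclass_eq h
  refine ((F.isMV _ (F.mclass_spec x).1).2).unique ⟨?_, ?_⟩
    ⟨(F.star_spec x).1, (F.star_spec x).2⟩
  · rw [← hc]; exact (F.star_spec y).1
  · intro z hz
    exact (F.star_spec y).2 z (by rwa [hc])

lemma star_star (x : X) : F.star (F.star x) = F.star x :=
  F.star_eq (F.star_spec x).1

lemma Pi_star (hreg : ∀ V ∈ F.mvs, L.Regular V) (x : X) :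
    F.Pi (F.star x) = L.clPt (F.star x) \ F.mclass x := by
  rw [MVField.Pi, if_pos (F.star_star x).symm, MVField.regPart,
    if_pos (hreg _ (F.mclass_spec (F.star x)).1), F.mclass_eq (F.star_spec x).1]

lemma leV_star (x : X) : F.leV (F.star x) x := by
  by_cases h : x = F.star x
  · rw [← h]
    exact Relation.ReflTransGen.refl
  · refine Relation.ReflTransGen.single ?_
    show F.star x ∈ F.Pi x
    rw [MVField.Pi, if_neg h]
    exact rfl

lemma facet_leV_star (hreg : ∀ V ∈ F.mvs, L.Regular V) {x y : X}
    (hκ : L.κ x y ≠ 0) (hy : y ∉ F.mclass x) : F.leV y (F.star x) := by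
  refine Relation.ReflTransGen.single ?_
  rw [F.Pi_star hreg]
  refine ⟨⟨F.star x, rfl, ?_⟩, hy⟩
  exact Relation.ReflTransGen.trans (Relation.ReflTransGen.single hκ)
    ((F.star_spec x).2 x (F.mclass_spec x).2)

end MVField

end CMVF

end Aux

section Main

open CMVF

variable {R : Type*} [Ring R] {X : Type*} [Fintype X]

lemma CMVF.Lefschetz.cycles_empty_le (L : Lefschetz R X) (n : ℕ) :
    L.cycles (∅ : Set X) n ≤ L.boundaries (∅ : Set X) n := by
  intro z hz
  rw [Lefschetz.cycles, Submodule.mem_inf, L.chainGroup_eq] at hz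
  have h1 : ∀ x, z x ≠ 0 → x ∈ (∅ : Set X) ∧ L.dim x = n := hz.1
  have hz0 : z = 0 := by
    funext x
    by_contra hx
    exact (h1 x hx).1
  rw [hz0]
  exact Submodule.zero_mem _

lemma CMVF.main_key (L : Lefschetz R X) (F : MVField L) (hac : F.Acyclic)
    (hreg : ∀ V ∈ F.mvs, L.Regular V) :
    ∀ (k : ℕ) (B : Set X), B.ncard ≤ k → L.Closed B → F.Compat B →
      ∀ n, L.cycles B n ≤ L.boundaries B n := by
  intro k
  induction k with
  | zero =>
    intro B hcard _ _ n
    have hB : B = ∅ := (Set.ncard_eq_zero (Set.toFinite B)).mp (Nat.le_zero.mp hcard)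
    rw [hB]
    exact L.cycles_empty_le n
  | succ k ih =>
    intro B hcard hBclosed hBcompat
    by_cases hBne : B = ∅
    · rw [hBne]; exact L.cycles_empty_le
    obtain ⟨b0, hb0⟩ := Set.nonempty_iff_ne_empty.mpr hBne
    classical
    letI po : PartialOrder X :=
      { le := F.leV
        lt := fun a b => F.leV a b ∧ ¬ F.leV b a
        le_refl := fun _ => Relation.ReflTransGen.refl
        le_trans := fun _ _ _ h1 h2 => Relation.ReflTransGen.trans h1 h2
        lt_iff_le_not_ge := fun _ _ => Iff.rfl
        le_antisymm := hac }
    set Bf : Finset X := (Set.toFinite B).toFinset with hBf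
    have hSne : (Bf.image F.star).Nonempty :=
      ⟨F.star b0, Finset.mem_image.mpr ⟨b0, (Set.Finite.mem_toFinset _).mpr hb0, rfl⟩⟩
    obtain ⟨m, hmM⟩ := Finset.exists_maximal hSne
    have hmS := hmM.1
    have hmax : ∀ x ∈ Bf.image F.star, ¬ m < x := fun x hx hlt => hlt.2 (hmM.2 hx hlt.1)
    obtain ⟨b, hbBf, hbm⟩ := Finset.mem_image.mp hmS
    have hbB : b ∈ B := (Set.Finite.mem_toFinset _).mp hbBf
    have hmstar : F.star m = m := by rw [← hbm, F.star_star]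
    set V : Set X := F.mclass m with hV
    have hmV : m ∈ V := (F.mclass_spec m).2
    have hVB : V ⊆ B := by
      have h1 : F.mclass m = F.mclass b :=
        F.mclass_eq (by rw [← hbm]; exact (F.star_spec b).1)
      rw [hV, h1]
      exact hBcompat b hbB
    have hclaim : ∀ x ∈ B, ∀ y, L.κ x y ≠ 0 → y ∈ V → x ∈ V := by
      intro x hx y hκ hyV
      by_contra hxV
      have hyx : y ∉ F.mclass x := by
        intro hmem
        apply hxV
        have h1 : F.mclass y = F.mclass x := F.mclass_eq hmem
        have h2 : F.mclass y = F.mclass m := F.mclass_eq hyV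
        rw [hV, ← h2, h1]
        exact (F.mclass_spec x).2
      have h1 : F.leV y (F.star x) := F.facet_leV_star hreg hκ hyx
      have h2 : F.leV m y := by
        have h3 : F.star y = m := by
          have := F.star_eq (x := m) hyV
          rw [this, hmstar]
        rw [← h3]
        exact F.leV_star y
      have h3 : F.leV m (F.star x) := Relation.ReflTransGen.trans h2 h1
      have hxS : F.star x ∈ Bf.image F.star :=
        Finset.mem_image.mpr ⟨x, (Set.Finite.mem_toFinset _).mpr hx, rfl⟩
      have h4 : F.leV (F.star x) m := by
        by_contra hc
        exact hmax (F.star x) hxS ⟨h3, hc⟩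
      have h5 : m = F.star x := hac m (F.star x) h3 h4
      apply hxV
      have h6 : F.mclass (F.star x) = F.mclass x := F.mclass_eq (F.star_spec x).1
      rw [hV, h5, h6]
      exact (F.mclass_spec x).2
    have hAfacet : ∀ x ∈ B \ V, ∀ y, L.κ x y ≠ 0 → y ∈ B \ V := by
      intro x hx y hκ
      have hyB : y ∈ B := (L.closed_iff_facet B).1 hBclosed x hx.1 y hκ
      exact ⟨hyB, fun hyV => hx.2 (hclaim x hx.1 y hκ hyV)⟩
    have hAclosed : L.Closed (B \ V) := (L.closed_iff_facet _).2 hAfacet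
    have hAcompat : F.Compat (B \ V) := by
      intro x hx z hz
      refine ⟨hBcompat x hx.1 hz, fun hzV => hx.2 ?_⟩
      have h1 : F.mclass z = F.mclass x := F.mclass_eq hz
      have h2 : F.mclass z = F.mclass m := F.mclass_eq hzV
      rw [hV, ← h2, h1]
      exact (F.mclass_spec x).2
    have hcard' : (B \ V).ncard ≤ k := by
      have hss : B \ V ⊂ B := ⟨Set.diff_subset, fun hsub => (hsub (hVB hmV)).2 hmV⟩
      have := Set.ncard_lt_ncard hss (Set.toFinite B)
      omega
    intro n z hz
    rw [Lefschetz.cycles, Submodule.mem_inf, L.chainGroup_eq] at hz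
    obtain ⟨hz1m, hz2m⟩ := hz
    have hz1 : ∀ x, z x ≠ 0 → x ∈ B ∧ L.dim x = n := hz1m
    have hz2 : L.bd B z = 0 := LinearMap.mem_ker.mp hz2m
    set zV : X → R := fun x => if x ∈ V then z x else 0 with hzVdef
    have hzV_chain : ∀ x, zV x ≠ 0 → x ∈ V ∧ L.dim x = n := by
      intro x hx
      by_cases hxV : x ∈ V
      · exact ⟨hxV, (hz1 x (by simpa [hzVdef, hxV] using hx)).2⟩
      · exact absurd (by simp [hzVdef, hxV]) hx
    have hbdV : L.bd V zV = 0 := by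
      funext y
      rw [Lefschetz.bd_apply]
      by_cases hyV : y ∈ V
      · rw [if_pos hyV]
        have hc1 : ∀ x : X, (if x ∈ V then zV x * L.κ x y else 0) =
            (if x ∈ B then z x * L.κ x y else 0) := by
          intro x
          by_cases hxV : x ∈ V
          · rw [if_pos hxV, if_pos (hVB hxV)]
            simp [hzVdef, hxV]
          · rw [if_neg hxV]
            by_cases hxB : x ∈ B
            · rw [if_pos hxB]
              by_cases hfx : z x = 0
              · rw [hfx, zero_mul]
              · by_cases hκ : L.κ x y = 0
                · rw [hκ, mul_zero]
                · exact absurd (hclaim x hxB y hκ hyV) hxV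
            · rw [if_neg hxB]
        rw [Finset.sum_congr rfl fun x _ => hc1 x]
        have h0 := congrFun hz2 y
        rw [Lefschetz.bd_apply, if_pos (hVB hyV)] at h0
        exact h0
      · rw [if_neg hyV]
        rfl
    have hzV_cycle : zV ∈ L.cycles V n := by
      rw [Lefschetz.cycles, Submodule.mem_inf, L.chainGroup_eq]
      exact ⟨hzV_chain, LinearMap.mem_ker.mpr hbdV⟩
    have hVreg : L.Regular V := hreg V (F.mclass_spec m).1
    obtain ⟨w, hw_memm, hw_bd⟩ := Submodule.mem_map.mp (L.regular_le hVreg n hzV_cycle)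
    rw [L.chainGroup_eq] at hw_memm
    have hw_mem : ∀ x, w x ≠ 0 → x ∈ V ∧ L.dim x = n + 1 := hw_memm
    have hwB : w ∈ L.chainSet B (n + 1) :=
      L.chainSet_mono hVB (n + 1) hw_memm
    set u : X → R := L.bd B w with hu
    have hu_chainm : u ∈ L.chainSet B n := by rw [hu]; exact L.bd_mem_chainSet hwB
    have hu_chain : ∀ x, u x ≠ 0 → x ∈ B ∧ L.dim x = n := hu_chainm
    have hu_V : ∀ y ∈ V, u y = z y := by
      intro y hyV
      have h1 : u y = ∑ x : X, (if x ∈ V then w x * L.κ x y else 0) := by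
        rw [hu, Lefschetz.bd_apply, if_pos (hVB hyV)]
        refine Finset.sum_congr rfl fun x _ => ?_
        by_cases hxV : x ∈ V
        · rw [if_pos (hVB hxV), if_pos hxV]
        · rw [if_neg hxV]
          by_cases hxB : x ∈ B
          · rw [if_pos hxB]
            by_cases hwx : w x = 0
            · rw [hwx, zero_mul]
            · exact absurd (hw_mem x hwx).1 hxV
          · rw [if_neg hxB]
      have h2 := congrFun hw_bd y
      rw [Lefschetz.bd_apply, if_pos hyV] at h2
      rw [h1, h2]
      simp [hzVdef, hyV]
    set z' : X → R := z - u with hz'def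
    have hz'_chainBm : z' ∈ L.chainSet B n := by
      rw [hz'def]
      exact Submodule.sub_mem _ hz1m hu_chainm
    have hz'_chainB : ∀ x, z' x ≠ 0 → x ∈ B ∧ L.dim x = n := hz'_chainBm
    have hz'_V0 : ∀ y ∈ V, z' y = 0 := by
      intro y hy
      have : z' y = z y - u y := rfl
      rw [this, hu_V y hy, sub_self]
    have hz'_chainA : ∀ x, z' x ≠ 0 → x ∈ B \ V ∧ L.dim x = n := by
      intro y hy
      have hB := hz'_chainB y hy
      exact ⟨⟨hB.1, fun hyV => hy (hz'_V0 y hyV)⟩, hB.2⟩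
    have hz'_chainAm : z' ∈ L.chainSet (B \ V) n := hz'_chainA
    have hz'_bd : L.bd (B \ V) z' = 0 := by
      rw [← L.bd_eq_of_closed Set.diff_subset hAclosed
        (fun x hx => (hz'_chainA x hx).1)]
      rw [hz'def, map_sub, hz2, hu, L.bd_bd hBclosed w]
      simp
    have hz'_cycles : z' ∈ L.cycles (B \ V) n := by
      rw [Lefschetz.cycles, Submodule.mem_inf, L.chainGroup_eq]
      exact ⟨hz'_chainAm, LinearMap.mem_ker.mpr hz'_bd⟩
    obtain ⟨w2, hw2_memm, hw2_bd⟩ :=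
      Submodule.mem_map.mp (ih (B \ V) hcard' hAclosed hAcompat n hz'_cycles)
    rw [L.chainGroup_eq] at hw2_memm
    have hw2B : L.bd (B \ V) w2 = L.bd B w2 :=
      (L.bd_eq_of_closed Set.diff_subset hAclosed
        (fun x hx => (hw2_memm x hx).1)).symm
    refine Submodule.mem_map.mpr ⟨w2 + w, ?_, ?_⟩
    · rw [L.chainGroup_eq]
      exact Submodule.add_mem _ (L.chainSet_mono Set.diff_subset _ hw2_memm) hwB
    · rw [map_add, ← hw2B, hw2_bd, ← hu, hz'def]
      abel

theorem acyclic_regular_zero_space' (L : Lefschetz R X)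
    (h : ∃ F : MVField L, F.Acyclic ∧ ∀ V ∈ F.mvs, L.Regular V) :
    L.HomologyZero (Set.univ : Set X) := by
  obtain ⟨F, hac, hreg⟩ := h
  have huniv_closed : L.Closed (Set.univ : Set X) :=
    (L.closed_iff_facet _).2 fun _ _ _ _ => trivial
  have hcompat : F.Compat Set.univ := fun x _ z _ => trivial
  have hkey := CMVF.main_key L F hac hreg (Set.ncard (Set.univ : Set X)) Set.univ
    le_rfl huniv_closed hcompat
  intro n
  have htop : ((L.boundaries Set.univ n).comap (L.cycles Set.univ n).subtype) = ⊤ := by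
    rw [eq_top_iff]
    intro zz _
    exact Submodule.mem_comap.mpr (hkey n zz.2)
  exact Submodule.Quotient.subsingleton_iff.mpr htop

end Main


variable {R : Type*} [Ring R] {X : Type*} [Fintype X]

/-- Theorem: if `X` admits an acyclic multivector field all of whose multivectors are
regular, then `X` is a zero space (`H^κ(X) = 0`). -/
theorem acyclic_regular_zero_space (L : Lefschetz R X)
    (h : ∃ F : MVField L, F.Acyclic ∧ ∀ V ∈ F.mvs, L.Regular V) :
    L.HomologyZero (Set.univ : Set X) := by
  exact acyclic_regular_zero_space' L h
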